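/- There are infinitely many Pythagorean triples (x, y, z) with x^2 + y^2 = z^2 such that exactly two of x, y, z are decimal palindromes. -/

import Mathlib

def IsDecimalPalindrome (n : ℕ) : Prop := (Nat.digits 10 n).reverse = Nat.digits 10 n

private def rep : ℕ → ℕ
  | 0 => 0
  | k + 1 => 10 * rep k + 1

private lemma digits_mul_rep (c : ℕ) (hc : 0 < c) (hc' : c < 10) :
    ∀ k, Nat.digits 10 (c * rep k) = List.replicate k c := by
  intro k
  induction k with
  | zero => simp [rep]
  | succ k ih =>
    have h : c * rep (k + 1) = 10 * (c * rep k) + c := by simp [rep]; ring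
    rw [h, Nat.digits_def' (by norm_num : 1 < 10) (by omega)]
    have h1 : (10 * (c * rep k) + c) % 10 = c := by omega
    have h2 : (10 * (c * rep k) + c) / 10 = c * rep k := by omega
    rw [h1, h2, ih, List.replicate_succ]

private lemma rep_ge : ∀ k, rep k ≥ k := by
  intro k
  induction k with
  | zero => simp
  | succ k ih => simp only [rep]; omega

theorem infinitely_many_triples_exactly_two_palindromes (N : ℕ) :
    ∃ x y z : ℕ, x ^ 2 + y ^ 2 = z ^ 2 ∧ z > N ∧
      ((IsDecimalPalindrome x ∧ IsDecimalPalindrome y ∧ ¬ IsDecimalPalindrome z) ∨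
       (IsDecimalPalindrome x ∧ ¬ IsDecimalPalindrome y ∧ IsDecimalPalindrome z) ∨
       (¬ IsDecimalPalindrome x ∧ IsDecimalPalindrome y ∧ IsDecimalPalindrome z)) := by
  set k := N + 1 with hk
  refine ⟨6 * rep k, 8 * rep k, 10 * rep k, by ring, ?_, Or.inl ⟨?_, ?_, ?_⟩⟩
  · have := rep_ge k
    omega
  · unfold IsDecimalPalindrome
    rw [digits_mul_rep 6 (by norm_num) (by norm_num), List.reverse_replicate]
  · unfold IsDecimalPalindrome
    rw [digits_mul_rep 8 (by norm_num) (by norm_num), List.reverse_replicate]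
  · unfold IsDecimalPalindrome
    have hpos : 0 < 10 * rep k := by have := rep_ge k; omega
    rw [Nat.digits_def' (by norm_num : 1 < 10) hpos]
    have h1 : (10 * rep k) % 10 = 0 := by omega
    have h2 : (10 * rep k) / 10 = rep k := by omega
    rw [h1, h2]
    have h3 : Nat.digits 10 (rep k) = List.replicate k 1 := by
      have := digits_mul_rep 1 (by norm_num) (by norm_num) k
      simpa using this
    rw [h3, hk, List.replicate_succ]
    intro h
    have h0 := congrArg List.head? h
    rcases N with _ | n <;> simp [List.replicate_succ, List.head?_replicate] at h0 <;> split_ifs at h0 <;> simp at h0
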